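/- Every pair of weaving fusion Riesz bases {(V_i, v_i)}, {(W_i, w_i)} for H is also a pair of weaving fusion frames for H, with the same universal bounds. -/

import Mathlib

open scoped RealInnerProductSpace Classical ENNReal

private lemma stmt12_inner_proj {H : Type*} [NormedAddCommGroup H] [InnerProductSpace ℝ H]
    (K : Submodule ℝ H) [CompleteSpace K] (f x : H) (hx : x ∈ K) :
    ⟪f, x⟫ = ⟪(Submodule.orthogonalProjectionOnto K f : H), x⟫ := by
  have h : ⟪f - (Submodule.orthogonalProjectionOnto K f : H), x⟫ = 0 :=
    K.starProjection_inner_eq_zero f x hx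
  rw [inner_sub_left] at h
  linarith

set_option maxHeartbeats 1000000 in
/-- Every pair of weaving fusion Riesz bases `{(V i, v i)}`,
`{(W i, w i)}` for `H` (with universal Riesz bounds `A ≤ B`) is also a pair of
weaving fusion frames for `H` with the same universal bounds `A ≤ B`. -/
theorem stmt12 {H : Type*} [NormedAddCommGroup H] [InnerProductSpace ℝ H]
    [CompleteSpace H] {I : Type*}
    (V W : I → Submodule ℝ H) [∀ i, CompleteSpace (V i)] [∀ i, CompleteSpace (W i)]
    (v w : I → ℝ) (A B : ℝ) (hA : 0 < A) (hAB : A ≤ B)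
    (hcomplete : ∀ σ : Set I,
      (⨆ i : I, if i ∈ σ then V i else W i).topologicalClosure = ⊤)
    (hRiesz : ∀ (σ : Set I) (s : Finset I) (f g : I → H),
      (∀ i, f i ∈ V i) → (∀ i, g i ∈ W i) →
      A * ((∑ i ∈ s.filter (· ∈ σ), ‖f i‖ ^ 2) + ∑ i ∈ s.filter (· ∉ σ), ‖g i‖ ^ 2) ≤
          ‖(∑ i ∈ s.filter (· ∈ σ), v i • f i) + ∑ i ∈ s.filter (· ∉ σ), w i • g i‖ ^ 2 ∧
        ‖(∑ i ∈ s.filter (· ∈ σ), v i • f i) + ∑ i ∈ s.filter (· ∉ σ), w i • g i‖ ^ 2 ≤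
          B * ((∑ i ∈ s.filter (· ∈ σ), ‖f i‖ ^ 2) + ∑ i ∈ s.filter (· ∉ σ), ‖g i‖ ^ 2)) :
    ∀ (σ : Set I) (f : H),
      A * ‖f‖ ^ 2 ≤
          (∑' i : σ, v i ^ 2 * ‖(Submodule.orthogonalProjectionOnto (V i) f : H)‖ ^ 2) +
            ∑' i : (σᶜ : Set I), w i ^ 2 * ‖(Submodule.orthogonalProjectionOnto (W i) f : H)‖ ^ 2 ∧
        (∑' i : σ, v i ^ 2 * ‖(Submodule.orthogonalProjectionOnto (V i) f : H)‖ ^ 2) +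
            (∑' i : (σᶜ : Set I), w i ^ 2 * ‖(Submodule.orthogonalProjectionOnto (W i) f : H)‖ ^ 2) ≤
          B * ‖f‖ ^ 2 := by
  classical
  intro σ f
  set aV : I → ℝ := fun i => v i ^ 2 * ‖(Submodule.orthogonalProjectionOnto (V i) f : H)‖ ^ 2 with haV
  set aW : I → ℝ := fun i => w i ^ 2 * ‖(Submodule.orthogonalProjectionOnto (W i) f : H)‖ ^ 2 with haW
  set mV : I → ℝ := Set.indicator σ aV with hmV
  set mW : I → ℝ := Set.indicator σᶜ aW with hmW
  have haV0 : ∀ i, 0 ≤ aV i := fun i => by positivity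
  have haW0 : ∀ i, 0 ≤ aW i := fun i => by positivity
  have hmV0 : ∀ i, 0 ≤ mV i := Set.indicator_nonneg fun i _ => haV0 i
  have hmW0 : ∀ i, 0 ≤ mW i := Set.indicator_nonneg fun i _ => haW0 i
  -- finset-sum of indicators equals filtered sums
  have ind1 : ∀ (s : Finset I) (g : I → ℝ) (t : Set I),
      ∑ i ∈ s, t.indicator g i = ∑ i ∈ s.filter (· ∈ t), g i := by
    intro s g t
    rw [← Finset.sum_filter_add_sum_filter_not s (· ∈ t) (t.indicator g)]
    have h1 : ∑ i ∈ s.filter (· ∈ t), t.indicator g i = ∑ i ∈ s.filter (· ∈ t), g i :=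
      Finset.sum_congr rfl fun i hi => Set.indicator_of_mem (Finset.mem_filter.mp hi).2 g
    have h2 : ∑ i ∈ s.filter (· ∉ t), t.indicator g i = 0 :=
      Finset.sum_eq_zero fun i hi => Set.indicator_of_notMem (Finset.mem_filter.mp hi).2 g
    rw [h1, h2, add_zero]
  have hsum_ind : ∀ s : Finset I, ∑ i ∈ s, (mV i + mW i)
      = (∑ i ∈ s.filter (· ∈ σ), aV i) + ∑ i ∈ s.filter (· ∉ σ), aW i := by
    intro s
    rw [Finset.sum_add_distrib, hmV, hmW, ind1 s aV σ, ind1 s aW σᶜ]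
    congr 2
    ext i
    simp [Set.mem_compl_iff]
  -- KEY upper estimate for all finite sums
  have key : ∀ s : Finset I, ∑ i ∈ s, (mV i + mW i) ≤ B * ‖f‖ ^ 2 := by
    intro s
    set F : I → H := fun i => v i • (Submodule.orthogonalProjectionOnto (V i) f : H) with hFdef
    set G : I → H := fun i => w i • (Submodule.orthogonalProjectionOnto (W i) f : H) with hGdef
    have hFmem : ∀ i, F i ∈ V i := fun i => Submodule.smul_mem _ _ (Submodule.coe_mem _)
    have hGmem : ∀ i, G i ∈ W i := fun i => Submodule.smul_mem _ _ (Submodule.coe_mem _)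
    obtain ⟨h1, h2⟩ := hRiesz σ s F G hFmem hGmem
    set T : ℝ := (∑ i ∈ s.filter (· ∈ σ), ‖F i‖ ^ 2) + ∑ i ∈ s.filter (· ∉ σ), ‖G i‖ ^ 2 with hT
    set u : H := (∑ i ∈ s.filter (· ∈ σ), v i • F i) + ∑ i ∈ s.filter (· ∉ σ), w i • G i with hu
    have hTsum : ∑ i ∈ s, (mV i + mW i) = T := by
      rw [hsum_ind s, hT]
      congr 1
      · refine Finset.sum_congr rfl fun i _ => ?_
        rw [hFdef]
        simp [norm_smul, mul_pow, haV]
      · refine Finset.sum_congr rfl fun i _ => ?_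
        rw [hGdef]
        simp [norm_smul, mul_pow, haW]
    have hinner : ⟪f, u⟫ = T := by
      rw [hu, inner_add_right, inner_sum, inner_sum, hT]
      congr 1
      · refine Finset.sum_congr rfl fun i _ => ?_
        rw [real_inner_smul_right,
          stmt12_inner_proj (V i) f (F i) (hFmem i), hFdef]
        simp only [real_inner_smul_right, real_inner_self_eq_norm_sq]
        rw [norm_smul]
        simp [mul_pow]
        ring
      · refine Finset.sum_congr rfl fun i _ => ?_
        rw [real_inner_smul_right,
          stmt12_inner_proj (W i) f (G i) (hGmem i), hGdef]
        simp only [real_inner_smul_right, real_inner_self_eq_norm_sq]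
        rw [norm_smul]
        simp [mul_pow]
        ring
    have hT0 : 0 ≤ T := by
      rw [← hTsum]
      exact Finset.sum_nonneg fun i _ => add_nonneg (hmV0 i) (hmW0 i)
    have hCS : T ≤ ‖f‖ * ‖u‖ := by rw [← hinner]; exact real_inner_le_norm f u
    rw [hTsum]
    rcases eq_or_lt_of_le hT0 with hT0' | hT0'
    · have hB : 0 < B := lt_of_lt_of_le hA hAB
      rw [← hT0']; positivity
    · -- T^2 ≤ ‖f‖^2 * ‖u‖^2 ≤ ‖f‖^2 * (B * T)
      have h3 : T ^ 2 ≤ ‖f‖ ^ 2 * (B * T) := by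
        calc T ^ 2 ≤ (‖f‖ * ‖u‖) ^ 2 := by
              apply pow_le_pow_left₀ hT0 hCS
          _ = ‖f‖ ^ 2 * ‖u‖ ^ 2 := by ring
          _ ≤ ‖f‖ ^ 2 * (B * T) := by
              apply mul_le_mul_of_nonneg_left h2 (by positivity)
      nlinarith [hT0', sq_nonneg (‖f‖ : ℝ)]
  -- summability
  have hmVs : Summable mV := by
    refine summable_of_sum_le hmV0 fun s => le_trans ?_ (key s)
    exact Finset.sum_le_sum fun i _ => le_add_of_nonneg_right (hmW0 i)
  have hmWs : Summable mW := by
    refine summable_of_sum_le hmW0 fun s => le_trans ?_ (key s)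
    exact Finset.sum_le_sum fun i _ => le_add_of_nonneg_left (hmV0 i)
  have hupper : (∑' i, mV i) + (∑' i, mW i) ≤ B * ‖f‖ ^ 2 := by
    rw [← Summable.tsum_add hmVs hmWs]
    exact Summable.tsum_le_of_sum_le (hmVs.add hmWs) key
  set S : ℝ := (∑' i, mV i) + (∑' i, mW i) with hSdef
  have hS0 : 0 ≤ S := add_nonneg (tsum_nonneg hmV0) (tsum_nonneg hmW0)
  -- single-index Riesz lower bounds
  have hsingleV : ∀ i ∈ σ, ∀ x ∈ V i, A * ‖x‖ ^ 2 ≤ ‖v i • x‖ ^ 2 := by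
    intro i hi x hx
    have hff : ∀ j, (if j = i then x else 0) ∈ V j := by
      intro j
      by_cases h : j = i
      · subst h; simpa using hx
      · simp [h]
    obtain ⟨h1, _⟩ :=
      hRiesz σ {i} (fun j => if j = i then x else 0) 0 hff (fun j => (W j).zero_mem)
    simpa [Finset.filter_singleton, hi] using h1
  have hsingleW : ∀ i ∉ σ, ∀ x ∈ W i, A * ‖x‖ ^ 2 ≤ ‖w i • x‖ ^ 2 := by
    intro i hi x hx
    have hgg : ∀ j, (if j = i then x else 0) ∈ W j := by
      intro j
      by_cases h : j = i
      · subst h; simpa using hx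
      · simp [h]
    obtain ⟨h1, _⟩ :=
      hRiesz σ {i} 0 (fun j => if j = i then x else 0) (fun j => (V j).zero_mem) hgg
    simpa [Finset.filter_singleton, hi] using h1
  have hvzeroV : ∀ i ∈ σ, v i = 0 → ∀ x ∈ V i, x = 0 := by
    intro i hi hv x hx
    have h := hsingleV i hi x hx
    rw [hv, zero_smul, norm_zero] at h
    have : ‖x‖ ^ 2 ≤ 0 := by nlinarith
    have hxx : ‖x‖ = 0 := by nlinarith [sq_nonneg ‖x‖, norm_nonneg x]
    exact norm_eq_zero.mp hxx
  have hvzeroW : ∀ i ∉ σ, w i = 0 → ∀ x ∈ W i, x = 0 := by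
    intro i hi hw x hx
    have h := hsingleW i hi x hx
    rw [hw, zero_smul, norm_zero] at h
    have : ‖x‖ ^ 2 ≤ 0 := by nlinarith
    have hxx : ‖x‖ = 0 := by nlinarith [sq_nonneg ‖x‖, norm_nonneg x]
    exact norm_eq_zero.mp hxx
  -- lower bound
  set C : ℝ := Real.sqrt S / Real.sqrt A with hCdef
  have hC0 : 0 ≤ C := by positivity
  have hmain : ∀ ε : ℝ, 0 < ε → ‖f‖ ^ 2 ≤ C * (‖f‖ + ε) + ‖f‖ * ε := by
    intro ε hε
    -- approximate f
    have hfU : f ∈ closure ((⨆ i : I, if i ∈ σ then V i else W i : Submodule ℝ H) : Set H) := by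
      rw [← Submodule.topologicalClosure_coe, hcomplete σ]
      simp
    obtain ⟨u, huU, hdu⟩ := Metric.mem_closure_iff.mp hfU ε hε
    rw [SetLike.mem_coe, Submodule.mem_iSup_iff_exists_dfinsupp'] at huU
    obtain ⟨d, hd⟩ := huU
    set s : Finset I := d.support with hsdef
    set Ffun : I → H := fun i =>
      if i ∈ σ then (if v i = 0 then 0 else (v i)⁻¹ • ((d i : H))) else 0 with hFfun
    set Gfun : I → H := fun i =>
      if i ∉ σ then (if w i = 0 then 0 else (w i)⁻¹ • ((d i : H))) else 0 with hGfun
    have hdV : ∀ i ∈ σ, (d i : H) ∈ V i := by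
      intro i hi
      have hle : (if i ∈ σ then V i else W i) ≤ V i := le_of_eq (if_pos hi)
      exact hle (d i).2
    have hdW : ∀ i ∉ σ, (d i : H) ∈ W i := by
      intro i hi
      have hle : (if i ∈ σ then V i else W i) ≤ W i := le_of_eq (if_neg hi)
      exact hle (d i).2
    have hFmem : ∀ i, Ffun i ∈ V i := by
      intro i
      simp only [hFfun]
      by_cases hi : i ∈ σ
      · rw [if_pos hi]
        by_cases hv : v i = 0
        · rw [if_pos hv]; exact (V i).zero_mem
        · rw [if_neg hv]; exact Submodule.smul_mem _ _ (hdV i hi)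
      · rw [if_neg hi]; exact (V i).zero_mem
    have hGmem : ∀ i, Gfun i ∈ W i := by
      intro i
      simp only [hGfun]
      by_cases hi : i ∉ σ
      · rw [if_pos hi]
        by_cases hw : w i = 0
        · rw [if_pos hw]; exact (W i).zero_mem
        · rw [if_neg hw]; exact Submodule.smul_mem _ _ (hdW i hi)
      · rw [if_neg hi]; exact (W i).zero_mem
    have hveq : ∀ i ∈ σ, v i • Ffun i = (d i : H) := by
      intro i hi
      simp only [hFfun]
      simp only [if_pos hi]
      by_cases hv : v i = 0
      · rw [if_pos hv, smul_zero]
        exact (hvzeroV i hi hv _ (hdV i hi)).symm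
      · rw [if_neg hv, smul_inv_smul₀ hv]
    have hweq : ∀ i ∉ σ, w i • Gfun i = (d i : H) := by
      intro i hi
      simp only [hGfun]
      simp only [if_pos hi]
      by_cases hw : w i = 0
      · rw [if_pos hw, smul_zero]
        exact (hvzeroW i hi hw _ (hdW i hi)).symm
      · rw [if_neg hw, smul_inv_smul₀ hw]
    have hsplit : u = (∑ i ∈ s.filter (· ∈ σ), v i • Ffun i)
        + ∑ i ∈ s.filter (· ∉ σ), w i • Gfun i := by
      rw [← hd, DFinsupp.sum, ← hsdef,
        ← Finset.sum_filter_add_sum_filter_not s (· ∈ σ) (fun i => ((d i : H)))]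
      congr 1
      · exact (Finset.sum_congr rfl fun i hi =>
          hveq i (Finset.mem_filter.mp hi).2).symm
      · exact (Finset.sum_congr rfl fun i hi =>
          hweq i (Finset.mem_filter.mp hi).2).symm
    obtain ⟨h1, _⟩ := hRiesz σ s Ffun Gfun hFmem hGmem
    rw [← hsplit] at h1
    set Fsum : ℝ := (∑ i ∈ s.filter (· ∈ σ), ‖Ffun i‖ ^ 2)
        + ∑ i ∈ s.filter (· ∉ σ), ‖Gfun i‖ ^ 2 with hFsum
    have hFsum0 : 0 ≤ Fsum := by positivity
    -- Cauchy-Schwarz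
    set aa : I → ℝ := fun i =>
      if i ∈ σ then |v i| * ‖(Submodule.orthogonalProjectionOnto (V i) f : H)‖
      else |w i| * ‖(Submodule.orthogonalProjectionOnto (W i) f : H)‖ with haa
    set bb : I → ℝ := fun i => if i ∈ σ then ‖Ffun i‖ else ‖Gfun i‖ with hbb
    have step1 : ⟪f, u⟫ ≤ ∑ i ∈ s, aa i * bb i := by
      rw [hsplit, inner_add_right, inner_sum, inner_sum,
        ← Finset.sum_filter_add_sum_filter_not s (· ∈ σ) (fun i => aa i * bb i)]
      apply add_le_add
      · refine Finset.sum_le_sum fun i hi => ?_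
        have hiσ := (Finset.mem_filter.mp hi).2
        have hm : v i • Ffun i ∈ V i := Submodule.smul_mem _ _ (hFmem i)
        rw [stmt12_inner_proj (V i) f _ hm]; simp only [haa, hbb]
        simp only [if_pos hiσ]
        calc ⟪(Submodule.orthogonalProjectionOnto (V i) f : H), v i • Ffun i⟫
            ≤ ‖(Submodule.orthogonalProjectionOnto (V i) f : H)‖ * ‖v i • Ffun i‖ :=
              real_inner_le_norm _ _
          _ = |v i| * ‖(Submodule.orthogonalProjectionOnto (V i) f : H)‖ * ‖Ffun i‖ := by
              rw [norm_smul]; simp [Real.norm_eq_abs]; ring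
      · refine Finset.sum_le_sum fun i hi => ?_
        have hiσ := (Finset.mem_filter.mp hi).2
        have hm : w i • Gfun i ∈ W i := Submodule.smul_mem _ _ (hGmem i)
        rw [stmt12_inner_proj (W i) f _ hm]; simp only [haa, hbb]
        simp only [if_neg hiσ]
        calc ⟪(Submodule.orthogonalProjectionOnto (W i) f : H), w i • Gfun i⟫
            ≤ ‖(Submodule.orthogonalProjectionOnto (W i) f : H)‖ * ‖w i • Gfun i‖ :=
              real_inner_le_norm _ _
          _ = |w i| * ‖(Submodule.orthogonalProjectionOnto (W i) f : H)‖ * ‖Gfun i‖ := by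
              rw [norm_smul]; simp [Real.norm_eq_abs]; ring
    have step3 : ∑ i ∈ s, aa i ^ 2 ≤ S := by
      have : ∀ i, aa i ^ 2 = mV i + mW i := by
        intro i
        simp only [haa];rw [ hmV, hmW]
        by_cases hi : i ∈ σ
        · rw [if_pos hi, Set.indicator_of_mem hi, Set.indicator_of_notMem (by simpa using hi)]
          rw [mul_pow, sq_abs, haV]; ring
        · rw [if_neg hi, Set.indicator_of_notMem hi, Set.indicator_of_mem (by simpa using hi)]
          rw [mul_pow, sq_abs, haW]; ring
      calc ∑ i ∈ s, aa i ^ 2 = ∑ i ∈ s, (mV i + mW i) := Finset.sum_congr rfl fun i _ => this i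
        _ ≤ (∑' i, mV i) + (∑' i, mW i) := by
            rw [Finset.sum_add_distrib]
            exact add_le_add (Summable.sum_le_tsum s (fun i _ => hmV0 i) hmVs)
              (Summable.sum_le_tsum s (fun i _ => hmW0 i) hmWs)
    have step4 : ∑ i ∈ s, bb i ^ 2 = Fsum := by
      rw [hFsum, ← Finset.sum_filter_add_sum_filter_not s (· ∈ σ) (fun i => bb i ^ 2)]
      congr 1
      · refine Finset.sum_congr rfl fun i hi => ?_
        simp only [hbb]; simp only [if_pos (Finset.mem_filter.mp hi).2]
      · refine Finset.sum_congr rfl fun i hi => ?_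
        simp only [hbb]; simp only [if_neg (Finset.mem_filter.mp hi).2]
    have step5 : ∑ i ∈ s, aa i * bb i ≤ C * ‖u‖ := by
      have hcs := Finset.sum_mul_sq_le_sq_mul_sq s aa bb
      have h6 : ∑ i ∈ s, aa i * bb i ≤
          Real.sqrt ((∑ i ∈ s, aa i ^ 2) * ∑ i ∈ s, bb i ^ 2) := by
        calc ∑ i ∈ s, aa i * bb i ≤ |∑ i ∈ s, aa i * bb i| := le_abs_self _
          _ = Real.sqrt ((∑ i ∈ s, aa i * bb i) ^ 2) := (Real.sqrt_sq_eq_abs _).symm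
          _ ≤ Real.sqrt ((∑ i ∈ s, aa i ^ 2) * ∑ i ∈ s, bb i ^ 2) :=
            Real.sqrt_le_sqrt hcs
      have haa2 : 0 ≤ ∑ i ∈ s, aa i ^ 2 := Finset.sum_nonneg fun i _ => sq_nonneg _
      have hbb2 : 0 ≤ ∑ i ∈ s, bb i ^ 2 := Finset.sum_nonneg fun i _ => sq_nonneg _
      have hb_le : ∑ i ∈ s, bb i ^ 2 ≤ ‖u‖ ^ 2 / A := by
        rw [step4, le_div_iff₀ hA, mul_comm]
        exact h1
      calc ∑ i ∈ s, aa i * bb i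
          ≤ Real.sqrt ((∑ i ∈ s, aa i ^ 2) * ∑ i ∈ s, bb i ^ 2) := h6
        _ = Real.sqrt (∑ i ∈ s, aa i ^ 2) * Real.sqrt (∑ i ∈ s, bb i ^ 2) :=
            Real.sqrt_mul haa2 _
        _ ≤ Real.sqrt S * Real.sqrt (‖u‖ ^ 2 / A) := by
            apply mul_le_mul (Real.sqrt_le_sqrt step3) (Real.sqrt_le_sqrt hb_le)
              (Real.sqrt_nonneg _) (Real.sqrt_nonneg _)
        _ = Real.sqrt S * (‖u‖ / Real.sqrt A) := by
            rw [Real.sqrt_div' _ hA.le, Real.sqrt_sq (norm_nonneg u)]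
        _ = C * ‖u‖ := by rw [hCdef]; ring
    -- assemble ε-estimate
    have hdist : ‖f - u‖ < ε := by rwa [← dist_eq_norm]
    have h7 : ‖f‖ ^ 2 - ‖f‖ * ε ≤ ⟪f, u⟫ := by
      have h8 : ⟪f, f - u⟫ ≤ ‖f‖ * ε := by
        calc ⟪f, f - u⟫ ≤ ‖f‖ * ‖f - u‖ := real_inner_le_norm _ _
          _ ≤ ‖f‖ * ε := by
              apply mul_le_mul_of_nonneg_left hdist.le (norm_nonneg f)
      have h9 : ⟪f, f - u⟫ = ‖f‖ ^ 2 - ⟪f, u⟫ := by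
        rw [inner_sub_right, real_inner_self_eq_norm_sq]
      linarith
    have h10 : ‖u‖ ≤ ‖f‖ + ε := by
      calc ‖u‖ = ‖f - (f - u)‖ := by congr 1; abel
        _ ≤ ‖f‖ + ‖f - u‖ := norm_sub_le _ _
        _ ≤ ‖f‖ + ε := by linarith
    have h11 : ⟪f, u⟫ ≤ C * (‖f‖ + ε) := by
      calc ⟪f, u⟫ ≤ ∑ i ∈ s, aa i * bb i := step1
        _ ≤ C * ‖u‖ := step5
        _ ≤ C * (‖f‖ + ε) := mul_le_mul_of_nonneg_left h10 hC0
    linarith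
  -- pass to the limit
  have hfC : ‖f‖ ^ 2 ≤ C * ‖f‖ := by
    refine le_of_forall_pos_le_add fun ε hε => ?_
    set δ : ℝ := ε / (C + ‖f‖ + 1) with hδdef
    have hden : (0 : ℝ) < C + ‖f‖ + 1 := by positivity
    have hδ : 0 < δ := by positivity
    have hmm := hmain δ hδ
    have hδe : δ * (C + ‖f‖ + 1) = ε := by
      rw [hδdef]; field_simp
    have hexp : C * (‖f‖ + δ) + ‖f‖ * δ = C * ‖f‖ + δ * (C + ‖f‖ + 1) - δ := by ring
    rw [hexp, hδe] at hmm
    linarith [hδ.le]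
  have hlower : A * ‖f‖ ^ 2 ≤ S := by
    by_cases hf0 : f = 0
    · simpa [hf0] using hS0
    · have hf : 0 < ‖f‖ := norm_pos_iff.mpr hf0
      have hfC' : ‖f‖ ≤ C := by
        have h' : ‖f‖ * ‖f‖ ≤ C * ‖f‖ := by rw [← pow_two]; exact hfC
        exact le_of_mul_le_mul_right h' hf
      have hA' : 0 < Real.sqrt A := Real.sqrt_pos.mpr hA
      have h8 : ‖f‖ * Real.sqrt A ≤ Real.sqrt S := by
        rw [hCdef] at hfC'
        exact (le_div_iff₀ hA').mp hfC'
      have h9 : (‖f‖ * Real.sqrt A) ^ 2 ≤ Real.sqrt S ^ 2 :=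
        pow_le_pow_left₀ (by positivity) h8 2
      rw [mul_pow, Real.sq_sqrt hA.le, Real.sq_sqrt hS0] at h9
      linarith
  -- rewrite the goal tsums
  have e1 : (∑' i : σ, v i ^ 2 * ‖(Submodule.orthogonalProjectionOnto (V i) f : H)‖ ^ 2) = ∑' i, mV i :=
    tsum_subtype σ aV
  have e2 : (∑' i : (σᶜ : Set I), w i ^ 2 * ‖(Submodule.orthogonalProjectionOnto (W i) f : H)‖ ^ 2)
      = ∑' i, mW i := tsum_subtype σᶜ aW
  rw [e1, e2]
  exact ⟨hlower, hupper⟩
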